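/- The eigenvalues of the n×n matrix M with M(1,1)=n+1, M(1,j)=M(j,1)=-1 for j≥2, M(j,j)=3 for j≥2, and all other entries 0, are {2, 3 (with multiplicity n-2), n+2}. -/

import Mathlib

open Polynomial

/-- The spectrum of the arrowhead matrix `L_S(S_n^2)`, with `M 0 0 = n+1`,
`M 0 j = M j 0 = -1` for `j ≠ 0`, `M j j = 3` for `j ≠ 0` and other entries `0`,
is `{2, 3^(n-2), n+2}` (stated via its characteristic polynomial). -/
theorem spectrum_LS (n : ℕ) (hn : 2 ≤ n)
    (M : Matrix (Fin n) (Fin n) ℝ)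
    (hM : M = Matrix.of fun i j =>
      if i = j then (if i.val = 0 then (n : ℝ) + 1 else 3)
      else if i.val = 0 ∨ j.val = 0 then -1 else 0) :
    M.charpoly = (X - 2) * (X - 3) ^ (n - 2) * (X - C ((n : ℝ) + 2)) := by
  obtain ⟨m, rfl⟩ : ∃ m, n = m + 2 := ⟨n - 2, by omega⟩

  set q : ℝ[X] := (X - C 3) * (X - C (((m+2 : ℕ) : ℝ) + 1)) - C (((m+2 : ℕ) : ℝ) - 1) with hq
  set N : Matrix (Fin (m+2)) (Fin (m+2)) ℝ[X] := Matrix.of (fun i j =>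
    if i = j then (if i.val = 0 then X - C (((m+2 : ℕ) : ℝ) + 1) else X - C 3)
    else if i.val = 0 ∨ j.val = 0 then 1 else 0) with hN
  set E : Matrix (Fin (m+2)) (Fin (m+2)) ℝ[X] := Matrix.of (fun i j =>
    if i.val = 0 then (if j.val = 0 then X - C 3 else -1)
    else if i = j then 1 else 0) with hE
  set L : Matrix (Fin (m+2)) (Fin (m+2)) ℝ[X] := Matrix.of (fun i j =>
    if i = j then (if i.val = 0 then q else X - C 3)
    else if j.val = 0 then 1 else 0) with hL
  have key : E * N = L := by
    refine Matrix.ext fun i j => ?_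
    rw [Matrix.mul_apply]
    rcases Fin.eq_zero_or_eq_succ i with rfl | ⟨i', rfl⟩
    · rw [Fin.sum_univ_succ]
      have hE0 : ∀ k : Fin (m+1), E 0 k.succ = -1 := fun k => by
        simp [hE, Fin.succ_ne_zero, (Fin.succ_ne_zero k).symm]
      simp only [hE0]
      rcases Fin.eq_zero_or_eq_succ j with rfl | ⟨j', rfl⟩
      · have hNk : ∀ k : Fin (m+1), N k.succ 0 = 1 := fun k => by
          simp [hN, (Fin.succ_ne_zero k)]
        simp only [hNk, mul_one]
        have hc : C (((m+2 : ℕ) : ℝ) - 1) = ((m+1 : ℕ) : ℝ[X]) := by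
          rw [show (((m+2 : ℕ) : ℝ) - 1) = ((m+1 : ℕ) : ℝ) by push_cast; ring, map_natCast]
        simp [hE, hN, hL, hq, hc, Finset.sum_const, map_ofNat]
        ring
      · have hNk : ∀ k : Fin (m+1), N k.succ j'.succ =
            if k = j' then X - C 3 else 0 := fun k => by
          simp [hN, Fin.succ_ne_zero, (Fin.succ_ne_zero k).symm,
            (Fin.succ_ne_zero j').symm, Fin.succ_inj]
        simp only [hNk, neg_one_mul, apply_ite (fun p : ℝ[X] => -p), neg_zero,
          Finset.sum_ite_eq', Finset.mem_univ, if_true]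
        simp [hE, hN, hL, (Fin.succ_ne_zero j').symm]
    · have hEk : ∀ k, E i'.succ k * N k j = if k = i'.succ then N i'.succ j else 0 := by
        intro k
        by_cases hk : k = i'.succ
        · subst hk; simp [hE, (Fin.succ_ne_zero i').symm]
        · have hk' : ¬ i'.succ = k := fun h => hk h.symm
          simp [hE, (Fin.succ_ne_zero i').symm, hk, hk']
      rw [Finset.sum_congr rfl (fun k _ => hEk k), Finset.sum_ite_eq' _ (i'.succ)]
      simp [hN, hL, (Fin.succ_ne_zero i').symm]
  have hdE : E.det = X - C 3 := by
    rw [Matrix.det_of_upperTriangular]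
    · rw [Fin.prod_univ_succ]
      simp [hE, Fin.succ_ne_zero]
    · intro i j hij
      have hi0 : i.val ≠ 0 := by
        simp only [Function.id_def] at hij; omega
      have hij' : i ≠ j := by
        intro h; subst h; exact lt_irrefl _ hij
      simp [hE, hi0, hij', (show i ≠ 0 from fun h => hi0 (by simp [h]))]
  have hdL : L.det = q * (X - C 3) ^ (m + 1) := by
    rw [Matrix.det_of_lowerTriangular]
    · rw [Fin.prod_univ_succ]
      simp [hL, Fin.succ_ne_zero]
    · intro i j hij
      have hij'' : i < j := hij
      have hj0 : j.val ≠ 0 := by omega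
      have hij' : ¬ i = j := fun h => by subst h; exact lt_irrefl _ hij''
      simp [hL, hij', hj0, (show j ≠ 0 from fun h => hj0 (by simp [h]))]
  have hq2 : q = (X - 2) * (X - C (((m+2 : ℕ) : ℝ) + 2)) := by
    rw [hq]
    have e1 : C (((m+2 : ℕ) : ℝ) + 1) = C ((m+2 : ℕ) : ℝ) + 1 := by simp
    have e2 : C (((m+2 : ℕ) : ℝ) - 1) = C ((m+2 : ℕ) : ℝ) - 1 := by simp
    have e3 : C (((m+2 : ℕ) : ℝ) + 2) = C ((m+2 : ℕ) : ℝ) + 2 := by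
      simp [map_ofNat]
    have e4 : C (3:ℝ) = 3 := by simp [map_ofNat]
    rw [e1, e2, e3, e4]
    ring
  have hmul : (X - C (3:ℝ)) * N.det = (X - C 3) *
      ((X - 2) * (X - 3) ^ (m + 2 - 2) * (X - C (((m+2 : ℕ) : ℝ) + 2))) := by
    have := congrArg Matrix.det key
    rw [Matrix.det_mul, hdE, hdL, hq2] at this
    rw [this]
    have e4 : C (3:ℝ) = 3 := by simp [map_ofNat]
    rw [e4]
    have : m + 2 - 2 = m := by omega
    rw [this]
    ring
  have hNdet : N.det = (X - 2) * (X - 3) ^ (m + 2 - 2) * (X - C (((m+2 : ℕ) : ℝ) + 2)) :=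
    mul_left_cancel₀ (Polynomial.X_sub_C_ne_zero 3) hmul
  have hcm : M.charpoly = N.det := by
    have : Matrix.charmatrix M = N := by
      refine Matrix.ext fun i j => ?_
      by_cases h : i = j
      · subst h
        simp [Matrix.charmatrix_apply_eq, hN, hM]
        split <;> simp
      · rw [Matrix.charmatrix_apply_ne _ _ _ h]
        simp only [hN, hM, Matrix.of_apply, if_neg h]
        split <;> simp
    rw [Matrix.charpoly, this]
  rw [hcm, hNdet]
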